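/- Define V(α, γ_s) = ∫_{Φ^{-1}(1−α)}^∞ Φ((γ_s·z + c)/√(1−γ_s²))·φ(z) dz with constant c ∈ ℝ, γ_s ∈ (0,1), α ∈ (0,1), and write γ_t = √(1−γ_s²). Then ∂V/∂γ_s = (1/γ_t)·φ(c)·φ((Φ^{-1}(1−α) + c·γ_s)/γ_t). -/

import Mathlib

noncomputable def phi (x : ℝ) : ℝ := (Real.sqrt (2 * Real.pi))⁻¹ * Real.exp (-x ^ 2 / 2)

noncomputable def Phi (t : ℝ) : ℝ := ∫ z in Set.Iic t, phi z

/-- The standard normal quantile function. -/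
noncomputable def Phiinv (p : ℝ) : ℝ := sInf {t : ℝ | p ≤ Phi t}

open MeasureTheory Real Set Filter

lemma phi_pos (x : ℝ) : 0 < phi x := by
  unfold phi
  positivity

lemma phi_le_one (x : ℝ) : phi x ≤ 1 := by
  unfold phi
  have h1 : Real.exp (-x ^ 2 / 2) ≤ 1 := by
    rw [Real.exp_le_one_iff]
    nlinarith [sq_nonneg x]
  have h2 : (Real.sqrt (2 * Real.pi))⁻¹ ≤ 1 := by
    rw [inv_le_one_iff₀]
    right
    rw [Real.one_le_sqrt]
    nlinarith [Real.pi_gt_three]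
  nlinarith [Real.sqrt_nonneg (2*Real.pi), Real.exp_pos (-x^2/2)]

lemma integrable_phi : Integrable phi := by
  have h := (integrable_exp_neg_mul_sq (by norm_num : (0:ℝ) < 1/2)).const_mul
    (Real.sqrt (2 * Real.pi))⁻¹
  refine h.congr (Filter.Eventually.of_forall fun x => ?_)
  unfold phi
  ring_nf

lemma continuous_phi : Continuous phi := by
  unfold phi
  fun_prop

lemma integral_phi : ∫ x, phi x = 1 := by
  unfold phi
  rw [integral_const_mul]
  have : ∀ x : ℝ, Real.exp (-x ^ 2 / 2) = Real.exp (-(1/2) * x ^ 2) := by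
    intro x; ring_nf
  simp_rw [this, integral_gaussian]
  rw [show Real.pi / (1/2) = 2 * Real.pi by ring]
  rw [inv_mul_cancel₀]
  positivity

lemma Phi_nonneg (t : ℝ) : 0 ≤ Phi t :=
  integral_nonneg fun x => (phi_pos x).le

lemma Phi_le_one (t : ℝ) : Phi t ≤ 1 := by
  rw [← integral_phi]
  exact setIntegral_le_integral integrable_phi
    (Filter.Eventually.of_forall fun x => (phi_pos x).le)

lemma hasDerivAt_Phi (t : ℝ) : HasDerivAt Phi (phi t) t := by
  have key : ∀ s : ℝ, Phi s = Phi 0 + ∫ x in (0:ℝ)..s, phi x := by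
    intro s
    have := intervalIntegral.integral_Iic_sub_Iic
      (integrable_phi.integrableOn (s := Iic (0:ℝ)))
      (integrable_phi.integrableOn (s := Iic s))
    unfold Phi
    linarith [this]
  have h : HasDerivAt (fun s => Phi 0 + ∫ x in (0:ℝ)..s, phi x) (phi t) t := by
    refine HasDerivAt.const_add _ ?_
    exact intervalIntegral.integral_hasDerivAt_right
      integrable_phi.intervalIntegrable
      (continuous_phi.stronglyMeasurableAtFilter _ _)
      continuous_phi.continuousAt
  exact h.congr_of_eventuallyEq (Filter.Eventually.of_forall key)

lemma continuous_Phi : Continuous Phi := by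
  have : ∀ t, HasDerivAt Phi (phi t) t := hasDerivAt_Phi
  exact continuous_iff_continuousAt.2 fun t => (this t).continuousAt

lemma hasDerivAt_phi (x : ℝ) : HasDerivAt phi (-x * phi x) x := by
  have h1 : HasDerivAt (fun x : ℝ => -x ^ 2 / 2) (-x) x := by
    have := ((hasDerivAt_pow 2 x).neg).div_const 2
    simpa using this.congr_deriv (by ring)
  have h2 := (h1.exp).const_mul (Real.sqrt (2 * Real.pi))⁻¹
  unfold phi
  refine h2.congr_deriv ?_
  ring

lemma hasDerivAt_inner (z c : ℝ) {g : ℝ} (hg : g ^ 2 < 1) :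
    HasDerivAt (fun g : ℝ => (g * z + c) / Real.sqrt (1 - g ^ 2))
      ((z + g * c) / (Real.sqrt (1 - g ^ 2)) ^ 3) g := by
  have h1 : (0:ℝ) < 1 - g ^ 2 := by linarith
  have hs : Real.sqrt (1 - g ^ 2) ≠ 0 := by positivity
  have hsq : (Real.sqrt (1 - g ^ 2)) ^ 2 = 1 - g ^ 2 := Real.sq_sqrt h1.le
  have hN : HasDerivAt (fun g : ℝ => g * z + c) z g := by
    simpa using (hasDerivAt_mul_const z).add_const c
  have hin : HasDerivAt (fun g : ℝ => 1 - g ^ 2) (-(2 * g)) g := by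
    simpa using ((hasDerivAt_pow 2 g).const_sub 1)
  have hD : HasDerivAt (fun g : ℝ => Real.sqrt (1 - g ^ 2))
      (-(2 * g) / (2 * Real.sqrt (1 - g ^ 2))) g := hin.sqrt h1.ne'
  have := hN.div hD hs
  refine this.congr_deriv ?_
  field_simp
  linear_combination z * hsq

lemma phi_mul (c γs z : ℝ) (hg : γs ^ 2 < 1) :
    phi ((γs * z + c) / Real.sqrt (1 - γs ^ 2)) * phi z =
      phi c * phi ((z + γs * c) / Real.sqrt (1 - γs ^ 2)) := by
  have h1 : (0:ℝ) < 1 - γs ^ 2 := by linarith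
  have hs : Real.sqrt (1 - γs ^ 2) ≠ 0 := by positivity
  have hsq : (Real.sqrt (1 - γs ^ 2)) ^ 2 = 1 - γs ^ 2 := Real.sq_sqrt h1.le
  unfold phi
  rw [mul_mul_mul_comm, ← Real.exp_add, mul_mul_mul_comm, ← Real.exp_add]
  congr 1
  rw [div_pow, div_pow, hsq]
  field_simp
  ring

lemma tendsto_phi_atTop : Tendsto phi atTop (nhds 0) := by
  have h1 : Tendsto (fun x : ℝ => -x ^ 2 / 2) atTop atBot := by
    apply Tendsto.atBot_div_const two_pos
    exact tendsto_neg_atBot_iff.2 (tendsto_pow_atTop two_ne_zero)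
  have h2 : Tendsto (fun x : ℝ => Real.exp (-x ^ 2 / 2)) atTop (nhds 0) :=
    Real.tendsto_exp_atBot.comp h1
  have := h2.const_mul (Real.sqrt (2 * Real.pi))⁻¹
  refine this.congr' ?_ |>.mono_right (by simp)
  · exact Filter.Eventually.of_forall fun x => rfl

lemma hasDerivAt_G (c γs : ℝ) (hg : γs ^ 2 < 1) (z : ℝ) :
    HasDerivAt (fun z : ℝ => -(phi c / Real.sqrt (1 - γs ^ 2)) *
        phi ((z + γs * c) / Real.sqrt (1 - γs ^ 2)))
      (phi c * ((z + γs * c) / (Real.sqrt (1 - γs ^ 2)) ^ 3) *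
        phi ((z + γs * c) / Real.sqrt (1 - γs ^ 2))) z := by
  have h1 : (0:ℝ) < 1 - γs ^ 2 := by linarith
  have hs : Real.sqrt (1 - γs ^ 2) ≠ 0 := by positivity
  have hsq : (Real.sqrt (1 - γs ^ 2)) ^ 2 = Real.sqrt (1-γs^2) * Real.sqrt (1-γs^2) := sq (Real.sqrt (1-γs^2)) ▸ by ring
  set s := Real.sqrt (1 - γs ^ 2)
  have hL : HasDerivAt (fun z : ℝ => (z + γs * c) / s) (1 / s) z := by
    simpa using ((hasDerivAt_id z).add_const (γs * c)).div_const s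
  have hcomp := ((hasDerivAt_phi ((z + γs * c) / s)).comp z hL).const_mul (-(phi c / s))
  refine hcomp.congr_deriv ?_
  field_simp

/-- Partial derivative in `γ_s` of the probit value function
`V(α, γ_s) = ∫_{Φ⁻¹(1-α)}^∞ Φ((γ_s z + c)/√(1-γ_s²)) φ(z) dz` equals
`(1/γ_t) φ(c) φ((Φ⁻¹(1-α) + c γ_s)/γ_t)` where `γ_t = √(1-γ_s²)`. -/
theorem probit_value_deriv_gamma (c γs α : ℝ) (hγs : γs ∈ Set.Ioo (0 : ℝ) 1)
    (hα : α ∈ Set.Ioo (0 : ℝ) 1) :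
    HasDerivAt
      (fun g : ℝ => ∫ z in Set.Ioi (Phiinv (1 - α)),
        Phi ((g * z + c) / Real.sqrt (1 - g ^ 2)) * phi z)
      ((1 / Real.sqrt (1 - γs ^ 2)) * phi c *
        phi ((Phiinv (1 - α) + c * γs) / Real.sqrt (1 - γs ^ 2))) γs := by
  obtain ⟨hγ0, hγ1⟩ := hγs
  set a := Phiinv (1 - α) with ha
  set μ := volume.restrict (Set.Ioi a) with hμ
  -- parameters for the local bound
  set ε : ℝ := (1 - γs) / 2 with hε
  have hεpos : 0 < ε := by simp [hε]; linarith
  set M : ℝ := (1 + γs) / 2 with hM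
  have hM1 : M < 1 := by simp [hM]; linarith
  have hM0 : 0 < M := by simp [hM]; linarith
  have hMball : ∀ x ∈ Metric.ball γs ε, |x| < M := by
    intro x hx
    rw [Metric.mem_ball, Real.dist_eq] at hx
    rw [abs_lt] at hx ⊢
    constructor <;> [skip; skip] <;> simp [hε, hM] at hx ⊢ <;> cases hx <;> linarith
  have hxsq : ∀ x ∈ Metric.ball γs ε, x ^ 2 < 1 := by
    intro x hx
    have := hMball x hx
    nlinarith [abs_nonneg x, sq_abs x]
  set δ : ℝ := Real.sqrt (1 - M ^ 2) with hδ
  have hδpos : 0 < δ := Real.sqrt_pos.2 (by nlinarith)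
  have hδle : ∀ x ∈ Metric.ball γs ε, δ ≤ Real.sqrt (1 - x ^ 2) := by
    intro x hx
    apply Real.sqrt_le_sqrt
    have h := hMball x hx
    nlinarith [sq_abs x, abs_nonneg x]
  -- the derivative integrand
  set F' : ℝ → ℝ → ℝ := fun x z =>
    phi ((x * z + c) / Real.sqrt (1 - x ^ 2)) *
      ((z + x * c) / (Real.sqrt (1 - x ^ 2)) ^ 3) * phi z with hF'
  set bound : ℝ → ℝ := fun z => (|z| + |c|) / δ ^ 3 * phi z with hbound
  have hγsball : γs ∈ Metric.ball γs ε := Metric.mem_ball_self hεpos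
  have hγsq : γs ^ 2 < 1 := hxsq γs hγsball
  have hγt : (0:ℝ) < Real.sqrt (1 - γs ^ 2) := Real.sqrt_pos.2 (by nlinarith)
  -- measurability of F x
  have hF_meas : ∀ᶠ x in nhds γs,
      AEStronglyMeasurable (fun z => Phi ((x * z + c) / Real.sqrt (1 - x ^ 2)) * phi z) μ := by
    refine Filter.Eventually.of_forall fun x => ?_
    exact ((continuous_Phi.comp (by fun_prop)).mul continuous_phi).aestronglyMeasurable
  -- integrability of F γs
  have hF_int : Integrable
      (fun z => Phi ((γs * z + c) / Real.sqrt (1 - γs ^ 2)) * phi z) μ := by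
    refine (integrable_phi.restrict).mono
      ((continuous_Phi.comp (by fun_prop)).mul continuous_phi).aestronglyMeasurable
      (Filter.Eventually.of_forall fun z => ?_)
    rw [Real.norm_eq_abs, Real.norm_eq_abs, abs_of_nonneg (phi_pos z).le,
      abs_of_nonneg (mul_nonneg (Phi_nonneg _) (phi_pos z).le)]
    nlinarith [Phi_nonneg ((γs * z + c) / Real.sqrt (1 - γs ^ 2)),
      Phi_le_one ((γs * z + c) / Real.sqrt (1 - γs ^ 2)), phi_pos z]
  -- measurability of F' γs
  have hF'_meas : AEStronglyMeasurable (F' γs) μ := by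
    apply Continuous.aestronglyMeasurable
    exact ((continuous_phi.comp (by fun_prop)).mul (by fun_prop)).mul continuous_phi
  -- the bound
  have h_bound : ∀ᵐ z ∂μ, ∀ x ∈ Metric.ball γs ε, ‖F' x z‖ ≤ bound z := by
    refine Filter.Eventually.of_forall fun z x hx => ?_
    have hxs := hδle x hx
    have hxa := hMball x hx
    have hδ3 : (0:ℝ) < δ ^ 3 := by positivity
    have hs3 : δ ^ 3 ≤ (Real.sqrt (1 - x ^ 2)) ^ 3 := by
      apply pow_le_pow_left₀ hδpos.le hxs
    rw [hF', hbound, Real.norm_eq_abs, abs_mul, abs_mul,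
      abs_of_nonneg (phi_pos _).le, abs_of_nonneg (phi_pos z).le]
    have h1 : |(z + x * c) / (Real.sqrt (1 - x ^ 2)) ^ 3| ≤ (|z| + |c|) / δ ^ 3 := by
      rw [abs_div, abs_of_nonneg (by positivity : (0:ℝ) ≤ (Real.sqrt (1 - x ^ 2)) ^ 3)]
      apply div_le_div₀ (by positivity) ?_ hδ3 hs3
      calc |z + x * c| ≤ |z| + |x * c| := abs_add_le _ _
        _ ≤ |z| + |c| := by
            rw [abs_mul]
            nlinarith [abs_nonneg c]
    calc phi ((x * z + c) / Real.sqrt (1 - x ^ 2)) * |(z + x * c) / (Real.sqrt (1 - x ^ 2)) ^ 3| * phi z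
        ≤ 1 * ((|z| + |c|) / δ ^ 3) * phi z := by
          apply mul_le_mul_of_nonneg_right _ (phi_pos z).le
          apply mul_le_mul (phi_le_one _) h1 (abs_nonneg _) zero_le_one
      _ = (|z| + |c|) / δ ^ 3 * phi z := by ring
  -- integrability of the bound
  have bound_int : Integrable bound μ := by
    have h1 : Integrable (fun z : ℝ => |z| * phi z) := by
      have h2 : Integrable (fun z : ℝ => |z * Real.exp (-(1/2) * z ^ 2)|) :=
        (integrable_mul_exp_neg_mul_sq (by norm_num : (0:ℝ) < 1/2)).abs
      refine (h2.const_mul (Real.sqrt (2 * Real.pi))⁻¹).congr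
        (Filter.Eventually.of_forall fun z => ?_)
      simp only [abs_mul, abs_of_nonneg (Real.exp_pos _).le]
      unfold phi
      rw [show -(1/2) * z ^ 2 = -z ^ 2 / 2 by ring]
      ring
    have h3 : Integrable (fun z : ℝ => (|z| + |c|) * phi z) := by
      have := h1.add ((integrable_phi).const_mul |c|)
      refine this.congr (Filter.Eventually.of_forall fun z => ?_)
      simp only [Pi.add_apply]
      ring
    have := h3.const_mul (δ ^ 3)⁻¹
    refine (this.restrict).congr (Filter.Eventually.of_forall fun z => ?_)
    rw [hbound]
    ring
  -- differentiability
  have h_diff : ∀ᵐ z ∂μ, ∀ x ∈ Metric.ball γs ε,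
      HasDerivAt (fun g => Phi ((g * z + c) / Real.sqrt (1 - g ^ 2)) * phi z) (F' x z) x := by
    refine Filter.Eventually.of_forall fun z x hx => ?_
    have hx2 := hxsq x hx
    have h1 := (hasDerivAt_Phi ((x * z + c) / Real.sqrt (1 - x ^ 2))).comp x
      (hasDerivAt_inner z c hx2)
    exact h1.mul_const (phi z)
  have key := hasDerivAt_integral_of_dominated_loc_of_deriv_le (Metric.ball_mem_nhds γs hεpos) hF_meas hF_int hF'_meas
    h_bound bound_int h_diff
  obtain ⟨hF'_int, hderiv⟩ := key
  -- evaluate the integral of F' γs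
  have heval : ∫ z in Set.Ioi a, F' γs z =
      (1 / Real.sqrt (1 - γs ^ 2)) * phi c *
        phi ((a + c * γs) / Real.sqrt (1 - γs ^ 2)) := by
    have hptwise : ∀ z : ℝ, F' γs z =
        phi c * ((z + γs * c) / (Real.sqrt (1 - γs ^ 2)) ^ 3) *
          phi ((z + γs * c) / Real.sqrt (1 - γs ^ 2)) := by
      intro z
      rw [hF']
      have := phi_mul c γs z hγsq
      calc phi ((γs * z + c) / Real.sqrt (1 - γs ^ 2)) *
            ((z + γs * c) / (Real.sqrt (1 - γs ^ 2)) ^ 3) * phi z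
          = (phi ((γs * z + c) / Real.sqrt (1 - γs ^ 2)) * phi z) *
            ((z + γs * c) / (Real.sqrt (1 - γs ^ 2)) ^ 3) := by ring
        _ = _ := by rw [this]; ring
    have htend : Tendsto (fun z : ℝ => -(phi c / Real.sqrt (1 - γs ^ 2)) *
        phi ((z + γs * c) / Real.sqrt (1 - γs ^ 2))) atTop (nhds 0) := by
      have h1 : Tendsto (fun z : ℝ => (z + γs * c) / Real.sqrt (1 - γs ^ 2)) atTop atTop := by
        apply Tendsto.atTop_div_const hγt
        exact tendsto_atTop_add_const_right _ _ tendsto_id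
      have h2 := (tendsto_phi_atTop.comp h1).const_mul (-(phi c / Real.sqrt (1 - γs ^ 2)))
      simpa using h2
    have hint : IntegrableOn (F' γs) (Set.Ioi a) := hF'_int
    have := integral_Ioi_of_hasDerivAt_of_tendsto' (a := a)
      (fun z _ => hasDerivAt_G c γs hγsq z)
      (by
        refine hint.congr_fun (fun z _ => hptwise z) measurableSet_Ioi)
      htend
    rw [show (fun z => F' γs z) = fun z => phi c * ((z + γs * c) /
        (Real.sqrt (1 - γs ^ 2)) ^ 3) * phi ((z + γs * c) / Real.sqrt (1 - γs ^ 2))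
      from funext hptwise]
    rw [this]
    rw [show a + c * γs = a + γs * c by ring]
    ring
  rw [← heval]
  exact hderiv
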